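/- arXiv:0812.3014 — 3 statements merged into one kernel-verified Lean document; each statement's English description precedes it below -/
import Mathlib

section
/- Let K be a field and E/K an elliptic curve whose endomorphism ring End(E) is a free Z-module of rank 2 (i.e., E has complex multiplication over K). If the group E(K) of K-rational points is finitely generated, then the rank of E(K) as a Z-module is even. -/
open TensorProduct

/-- Auxiliary general lemma: if `R` is a domain which is free of `ℤ`-rank 2, then any
`R`-module which is finitely generated over `ℤ` has even `ℤ`-rank. -/
lemma aux_even_finrank (R : Type*) [CommRing R] [IsDomain R] [Module.Free ℤ R]
    (hR : Module.finrank ℤ R = 2)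
    (M : Type*) [AddCommGroup M] [Module R M] [Module.Finite ℤ M] :
    Even (Module.finrank ℤ M) := by
  classical
  -- V = ℚ ⊗ M is the localization of M at ℤ⁰
  haveI hLM : IsLocalizedModule (nonZeroDivisors ℤ) (TensorProduct.mk ℤ ℚ M 1) :=
    (isLocalizedModule_iff_isBaseChange (nonZeroDivisors ℤ) ℚ _).mpr
      (TensorProduct.isBaseChange ℤ M ℚ)
  have hrank : Module.rank ℚ (ℚ ⊗[ℤ] M) = Module.rank ℤ M :=
    (IsLocalization.rank_eq (S := ℚ) (p := nonZeroDivisors ℤ) (hp := le_rfl)).trans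
      (@IsLocalizedModule.rank_eq ℤ M _ _ _ (nonZeroDivisors ℤ) le_rfl _ _ _
      (TensorProduct.mk ℤ ℚ M 1) hLM)
  have hfr : Module.finrank ℚ (ℚ ⊗[ℤ] M) = Module.finrank ℤ M := by
    simp [Module.finrank, hrank]
  -- the action of R on V
  let ρ : R →+* Module.End ℚ (ℚ ⊗[ℤ] M) :=
    (Module.End.baseChangeHom ℤ ℚ M).toRingHom.comp (Module.toModuleEnd ℤ M)
  letI : Module R (ℚ ⊗[ℤ] M) := Module.compHom _ ρ
  have hsmul : ∀ (r : R) (v : ℚ ⊗[ℤ] M), r • v = ρ r v := fun _ _ => rfl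
  haveI : SMulCommClass ℚ R (ℚ ⊗[ℤ] M) :=
    ⟨fun q r v => by rw [hsmul, hsmul]; exact ((ρ r).map_smul q v).symm⟩
  haveI : IsScalarTower ℤ R (ℚ ⊗[ℤ] M) := by
    refine ⟨fun n r v => ?_⟩
    rw [hsmul, hsmul, zsmul_eq_mul, map_mul, map_intCast]
    simp [Module.End.intCast_apply]
  -- F = ℚ ⊗ R acts on V
  letI : Module (ℚ ⊗[ℤ] R) (ℚ ⊗[ℤ] M) := TensorProduct.Algebra.module
  haveI : IsScalarTower ℚ (ℚ ⊗[ℤ] R) (ℚ ⊗[ℤ] M) := by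
    refine IsScalarTower.of_algebraMap_smul (R := ℚ) (A := ℚ ⊗[ℤ] R) (M := ℚ ⊗[ℤ] M)
      fun q v => ?_
    have h1 : (algebraMap ℚ (ℚ ⊗[ℤ] R)) q = q ⊗ₜ[ℤ] (1 : R) := by
      rw [Algebra.TensorProduct.algebraMap_apply, Algebra.algebraMap_self_apply]
    rw [h1, TensorProduct.Algebra.smul_def, one_smul]
  -- F is a field: it is the localization of the domain R at the nonzero integers,
  -- hence a domain, and a finite-dimensional domain over ℚ is a field
  letI : Algebra R (ℚ ⊗[ℤ] R) := Algebra.TensorProduct.rightAlgebra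
  haveI : IsScalarTower ℤ R (ℚ ⊗[ℤ] R) :=
    IsScalarTower.of_algebraMap_eq' (RingHom.ext_int _ _)
  haveI hLR : IsLocalizedModule (nonZeroDivisors ℤ)
      (IsScalarTower.toAlgHom ℤ R (ℚ ⊗[ℤ] R)).toLinearMap := by
    have heq : (IsScalarTower.toAlgHom ℤ R (ℚ ⊗[ℤ] R)).toLinearMap
        = TensorProduct.mk ℤ ℚ R 1 := by
      ext r; rfl
    rw [heq]
    exact (isLocalizedModule_iff_isBaseChange (nonZeroDivisors ℤ) ℚ _).mpr
      (TensorProduct.isBaseChange ℤ R ℚ)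
  haveI : IsLocalization (Algebra.algebraMapSubmonoid R (nonZeroDivisors ℤ)) (ℚ ⊗[ℤ] R) :=
    isLocalizedModule_iff_isLocalization.mp hLR
  have hsub : Algebra.algebraMapSubmonoid R (nonZeroDivisors ℤ) ≤ nonZeroDivisors R := by
    rintro x ⟨n, hn, rfl⟩
    refine mem_nonZeroDivisors_of_ne_zero ?_
    have hn0 : (n : ℤ) ≠ 0 := nonZeroDivisors.ne_zero hn
    have : Function.Injective (algebraMap ℤ R) :=
      FaithfulSMul.algebraMap_injective ℤ R
    simpa using fun h => hn0 (this (by simpa using h))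
  haveI : IsDomain (ℚ ⊗[ℤ] R) := IsLocalization.isDomain_of_le_nonZeroDivisors (ℚ ⊗[ℤ] R) hsub
  have hF2 : Module.finrank ℚ (ℚ ⊗[ℤ] R) = 2 := by
    rw [Module.finrank_baseChange, hR]
  haveI : FiniteDimensional ℚ (ℚ ⊗[ℤ] R) := FiniteDimensional.of_finrank_eq_succ hF2
  haveI : Algebra.IsIntegral ℚ (ℚ ⊗[ℤ] R) := Algebra.IsIntegral.of_finite ℚ _
  have hfield : IsField (ℚ ⊗[ℤ] R) :=
    isField_of_isIntegral_of_isField' (Field.toIsField ℚ)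
  letI : Field (ℚ ⊗[ℤ] R) := hfield.toField
  -- tower law: dim_ℚ V = dim_ℚ F * dim_F V = 2 * dim_F V is even
  have htower : Module.finrank ℚ (ℚ ⊗[ℤ] R) * Module.finrank (ℚ ⊗[ℤ] R) (ℚ ⊗[ℤ] M)
      = Module.finrank ℚ (ℚ ⊗[ℤ] M) :=
    Module.finrank_mul_finrank ℚ (ℚ ⊗[ℤ] R) (ℚ ⊗[ℤ] M)
  rw [← hfr, ← htower, hF2]
  exact ⟨_, two_mul _⟩

open scoped Classical in
/-- Let `K` be a field and `E/K` an elliptic curve whose endomorphism ring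
`End(E)` is a free `ℤ`-module of rank 2 (i.e. `E` has complex multiplication over `K`;
`End(E)` is an integral domain acting on the group of points `E(K)`, which we encode as a
module structure of an abstract such ring `R` on `E(K)`). If the group `E(K)` of
`K`-rational points is finitely generated, then the rank of `E(K)` as a `ℤ`-module is
even. -/
theorem stmt_0 (K : Type*) [Field K] (W : WeierstrassCurve.Affine K) (hΔ : W.Δ ≠ 0)
    (R : Type*) [CommRing R] [IsDomain R] [Module.Free ℤ R]
    (hR : Module.finrank ℤ R = 2)
    [Module R W.Point]
    (hfg : Module.Finite ℤ W.Point) :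
    Even (Module.finrank ℤ W.Point) := by
  exact aux_even_finrank R hR W.Point
end

section
/- Let p1, ..., pm be distinct points in the complex projective plane P^2 with m ≤ 9, no four of them collinear and no seven lying on a common conic. Let φ: C[z0,z1,z2]_2 → C^m be the evaluation map of quadratic forms at the points pi (with respect to fixed affine representatives). Then the cokernel of φ has dimension m - 6 if m ≥ 7; dimension 0 if m ≤ 5; and for m = 6 the cokernel has dimension 1 if all six points lie on a conic and dimension 0 otherwise. -/
open MvPolynomial Matrix Module

/-- Evaluation of homogeneous quadratic forms in `ℂ[z₀, z₁, z₂]` at the (affine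
representatives of the) `m` points `p 0, …, p (m-1)`, as a linear map
`ℂ[z₀,z₁,z₂]₂ → ℂ^m`. -/
noncomputable def evalMap (m : ℕ) (p : Fin m → (Fin 3 → ℂ)) :
    (MvPolynomial.homogeneousSubmodule (Fin 3) ℂ 2) →ₗ[ℂ] (Fin m → ℂ) :=
  (LinearMap.pi fun i => (MvPolynomial.aeval (p i)).toLinearMap) ∘ₗ
    (MvPolynomial.homogeneousSubmodule (Fin 3) ℂ 2).subtype

namespace Stmt7Aux

/-! ### Linear forms from vectors -/

noncomputable def linPoly (w : Fin 3 → ℂ) : MvPolynomial (Fin 3) ℂ :=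
  ∑ j, C (w j) * X j

lemma eval_linPoly (w v : Fin 3 → ℂ) : eval v (linPoly w) = w ⬝ᵥ v := by
  simp [linPoly, dotProduct]

lemma linPoly_isHomogeneous (w : Fin 3 → ℂ) : (linPoly w).IsHomogeneous 1 := by
  apply IsHomogeneous.sum
  intro j _
  exact (isHomogeneous_X ℂ j).C_mul _

lemma linPoly_ne_zero {w : Fin 3 → ℂ} (hw : w ≠ 0) : linPoly w ≠ 0 := by
  intro h
  apply hw
  funext k
  have h2 := congrArg (eval (Pi.single k 1)) h
  simpa [eval_linPoly] using h2

/-! ### Cross product facts -/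

lemma cross_ne_zero {a x : Fin 3 → ℂ} (ha : a ≠ 0) (h : ¬ ∃ c : ℂ, x = c • a) :
    a ⨯₃ x ≠ 0 := by
  intro hc
  apply h
  have h0 := congrFun hc 0
  have h1 := congrFun hc 1
  have h2 := congrFun hc 2
  simp only [cross_apply, Matrix.cons_val_zero, Matrix.cons_val_one, Matrix.head_cons,
    Pi.zero_apply, sub_eq_zero, Matrix.cons_val_two, Matrix.tail_cons] at h0 h1 h2
  rcases Function.ne_iff.mp ha with ⟨j, hj⟩
  simp only [Pi.zero_apply] at hj
  fin_cases j
  · have ha0 : a 0 ≠ 0 := hj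
    refine ⟨x 0 / a 0, funext fun k => ?_⟩
    fin_cases k
    · show x 0 = x 0 / a 0 * a 0
      field_simp
    · show x 1 = x 0 / a 0 * a 1
      field_simp
      first | linear_combination h2 | linear_combination -h2
    · show x 2 = x 0 / a 0 * a 2
      field_simp
      first | linear_combination h1 | linear_combination -h1
  · have ha1 : a 1 ≠ 0 := hj
    refine ⟨x 1 / a 1, funext fun k => ?_⟩
    fin_cases k
    · show x 0 = x 1 / a 1 * a 0
      field_simp
      first | linear_combination h2 | linear_combination -h2
    · show x 1 = x 1 / a 1 * a 1
      field_simp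
    · show x 2 = x 1 / a 1 * a 2
      field_simp
      first | linear_combination h0 | linear_combination -h0
  · have ha2 : a 2 ≠ 0 := hj
    refine ⟨x 2 / a 2, funext fun k => ?_⟩
    fin_cases k
    · show x 0 = x 2 / a 2 * a 0
      field_simp
      first | linear_combination h1 | linear_combination -h1
    · show x 1 = x 2 / a 2 * a 1
      field_simp
      first | linear_combination h0 | linear_combination -h0
    · show x 2 = x 2 / a 2 * a 2
      field_simp

lemma cross_dot_flip (a x b : Fin 3 → ℂ) : (a ⨯₃ x) ⬝ᵥ b = -(x ⬝ᵥ (a ⨯₃ b)) := by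
  simp [cross_apply, dotProduct, Fin.sum_univ_three]; ring

lemma exists_w0 {x : Fin 3 → ℂ} (hx : x ≠ 0) : ∃ w : Fin 3 → ℂ, w ⬝ᵥ x ≠ 0 := by
  rcases Function.ne_iff.mp hx with ⟨j, hj⟩
  simp only [Pi.zero_apply] at hj
  exact ⟨Pi.single j 1, by simpa [single_dotProduct] using hj⟩

lemma exists_w1 {a x : Fin 3 → ℂ} (ha : a ≠ 0) (h : ¬ ∃ c : ℂ, x = c • a) :
    ∃ w : Fin 3 → ℂ, w ⬝ᵥ a = 0 ∧ w ⬝ᵥ x ≠ 0 := by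
  have hc : a ⨯₃ x ≠ 0 := cross_ne_zero ha h
  have hc' : x ⨯₃ a ≠ 0 := by
    rw [← cross_anticomm]
    exact neg_ne_zero.mpr hc
  rcases Function.ne_iff.mp hc' with ⟨j, hj⟩
  simp only [Pi.zero_apply] at hj
  refine ⟨a ⨯₃ (Pi.single j 1), ?_, ?_⟩
  · rw [dotProduct_comm]
    exact dot_self_cross _ _
  · rw [dotProduct_comm, triple_product_permutation, triple_product_permutation]
    simpa [single_dotProduct] using hj

end Stmt7Aux

section Main

open Stmt7Aux

variable {m : ℕ} {p : Fin m → (Fin 3 → ℂ)}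

/-- From `h4`: no nonzero vector is orthogonal to four of the points. -/
lemma no4 (h4 : ¬ ∃ (s : Finset (Fin m)) (l : MvPolynomial (Fin 3) ℂ),
      s.card = 4 ∧ l ≠ 0 ∧ l.IsHomogeneous 1 ∧ ∀ i ∈ s, MvPolynomial.eval (p i) l = 0)
    {i1 i2 i3 i4 : Fin m} (h12 : i1 ≠ i2) (h13 : i1 ≠ i3) (h14 : i1 ≠ i4)
    (h23 : i2 ≠ i3) (h24 : i2 ≠ i4) (h34 : i3 ≠ i4)
    {w : Fin 3 → ℂ} (hw : w ≠ 0)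
    (e1 : w ⬝ᵥ p i1 = 0) (e2 : w ⬝ᵥ p i2 = 0) (e3 : w ⬝ᵥ p i3 = 0) (e4 : w ⬝ᵥ p i4 = 0) :
    False := by
  apply h4
  refine ⟨{i1, i2, i3, i4}, linPoly w, ?_, linPoly_ne_zero hw, linPoly_isHomogeneous w, ?_⟩
  · rw [Finset.card_insert_of_notMem (by simp [h12, h13, h14]),
      Finset.card_insert_of_notMem (by simp [h23, h24]),
      Finset.card_insert_of_notMem (by simp [h34]), Finset.card_singleton]
  · intro i hi
    simp only [Finset.mem_insert, Finset.mem_singleton] at hi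
    rcases hi with rfl | rfl | rfl | rfl <;>
      simp [eval_linPoly, e1, e2, e3, e4]

/-- Key degenerate-conic step: if the line through `p ia, p ib` and the line through
`p ia, p ic` both pass through `p ix`, we get four points killed by one linear form. -/
lemma kprime (h4 : ¬ ∃ (s : Finset (Fin m)) (l : MvPolynomial (Fin 3) ℂ),
      s.card = 4 ∧ l ≠ 0 ∧ l.IsHomogeneous 1 ∧ ∀ i ∈ s, MvPolynomial.eval (p i) l = 0)
    {ia ib ic ix : Fin m}
    (hab : ia ≠ ib) (hac : ia ≠ ic) (hax : ia ≠ ix) (hbc : ib ≠ ic) (hbx : ib ≠ ix)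
    (hcx : ic ≠ ix)
    (ha0 : p ia ≠ 0) (hprop : ¬ ∃ c : ℂ, p ix = c • p ia)
    (hb : p ix ⬝ᵥ (p ia ⨯₃ p ib) = 0) (hc : p ix ⬝ᵥ (p ia ⨯₃ p ic) = 0) : False := by
  set w := p ia ⨯₃ p ix with hw_def
  have hw : w ≠ 0 := cross_ne_zero ha0 hprop
  refine no4 h4 hab hac hax hbc hbx hcx hw ?_ ?_ ?_ ?_
  · rw [dotProduct_comm]; exact dot_self_cross _ _
  · rw [cross_dot_flip, hb, neg_zero]
  · rw [cross_dot_flip, hc, neg_zero]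
  · rw [dotProduct_comm]; exact dot_cross_self _ _

/-- Core geometric lemma: a (possibly degenerate) conic through at most four of the other
points, avoiding `p i`. -/
lemma key (hne : ∀ i, p i ≠ 0)
    (hdist : ∀ i j, i ≠ j → ¬ ∃ c : ℂ, p j = c • p i)
    (h4 : ¬ ∃ (s : Finset (Fin m)) (l : MvPolynomial (Fin 3) ℂ),
      s.card = 4 ∧ l ≠ 0 ∧ l.IsHomogeneous 1 ∧ ∀ i ∈ s, MvPolynomial.eval (p i) l = 0)
    (i : Fin m) (s : Finset (Fin m)) (his : i ∉ s) (hcard : s.card ≤ 4) :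
    ∃ w1 w2 : Fin 3 → ℂ, (∀ j ∈ s, (w1 ⬝ᵥ p j) * (w2 ⬝ᵥ p j) = 0) ∧
      (w1 ⬝ᵥ p i) ≠ 0 ∧ (w2 ⬝ᵥ p i) ≠ 0 := by
  -- a helper for single lines
  have line : ∀ j : Fin m, j ≠ i → ∃ w : Fin 3 → ℂ, w ⬝ᵥ p j = 0 ∧ w ⬝ᵥ p i ≠ 0 := by
    intro j hj
    exact exists_w1 (hne j) (hdist j i hj)
  have h04 : s.card = 0 ∨ s.card = 1 ∨ s.card = 2 ∨ s.card = 3 ∨ s.card = 4 := by omega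
  rcases h04 with h | h | h | h | h
  · -- no points
    rw [Finset.card_eq_zero] at h
    subst h
    obtain ⟨w, hw⟩ := exists_w0 (hne i)
    exact ⟨w, w, by simp, hw, hw⟩
  · -- one point
    rw [Finset.card_eq_one] at h
    obtain ⟨a, rfl⟩ := h
    have hai : a ≠ i := by rintro rfl; simp at his
    obtain ⟨w1, hw1a, hw1i⟩ := line a hai
    obtain ⟨w2, hw2⟩ := exists_w0 (hne i)
    refine ⟨w1, w2, ?_, hw1i, hw2⟩
    intro j hj
    rw [Finset.mem_singleton] at hj
    subst hj
    rw [hw1a, zero_mul]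
  · -- two points
    rw [Finset.card_eq_two] at h
    obtain ⟨a, b, hab, rfl⟩ := h
    have hai : a ≠ i := by rintro rfl; simp at his
    have hbi : b ≠ i := by rintro rfl; simp at his
    obtain ⟨w1, hw1a, hw1i⟩ := line a hai
    obtain ⟨w2, hw2b, hw2i⟩ := line b hbi
    refine ⟨w1, w2, ?_, hw1i, hw2i⟩
    intro j hj
    simp only [Finset.mem_insert, Finset.mem_singleton] at hj
    rcases hj with rfl | rfl
    · rw [hw1a, zero_mul]
    · rw [hw2b, mul_zero]
  · -- three points
    rw [Finset.card_eq_three] at h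
    obtain ⟨a, b, c, hab, hac, hbc, rfl⟩ := h
    have hai : a ≠ i := by rintro rfl; simp at his
    have hbi : b ≠ i := by rintro rfl; simp at his
    have hci : c ≠ i := by rintro rfl; simp at his
    by_cases hB1 : p i ⬝ᵥ (p a ⨯₃ p b) = 0
    · by_cases hB2 : p i ⬝ᵥ (p a ⨯₃ p c) = 0
      · exact absurd (kprime h4 hab hac hai hbc hbi hci (hne a)
          (hdist a i hai) hB1 hB2) not_false
      · -- line (a,c) avoids i; line for b
        obtain ⟨w2, hw2b, hw2i⟩ := line b hbi
        refine ⟨p a ⨯₃ p c, w2, ?_, by rwa [dotProduct_comm], hw2i⟩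
        intro j hj
        simp only [Finset.mem_insert, Finset.mem_singleton] at hj
        rcases hj with rfl | rfl | rfl
        · rw [dotProduct_comm, dot_self_cross, zero_mul]
        · rw [hw2b, mul_zero]
        · rw [dotProduct_comm, dot_cross_self, zero_mul]
    · -- line (a,b) avoids i; line for c
      obtain ⟨w2, hw2c, hw2i⟩ := line c hci
      refine ⟨p a ⨯₃ p b, w2, ?_, by rwa [dotProduct_comm], hw2i⟩
      intro j hj
      simp only [Finset.mem_insert, Finset.mem_singleton] at hj
      rcases hj with rfl | rfl | rfl
      · rw [dotProduct_comm, dot_self_cross, zero_mul]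
      · rw [dotProduct_comm, dot_cross_self, zero_mul]
      · rw [hw2c, mul_zero]
  · -- four points
    obtain ⟨a, t, hat, rfl, ht3⟩ := Finset.card_eq_succ.mp h
    rw [Finset.card_eq_three] at ht3
    obtain ⟨b, c, d, hbc, hbd, hcd, rfl⟩ := ht3
    have hab : a ≠ b := by rintro rfl; simp at hat
    have hac : a ≠ c := by rintro rfl; simp at hat
    have had : a ≠ d := by rintro rfl; simp at hat
    have hai : a ≠ i := by rintro rfl; simp at his
    have hbi : b ≠ i := by rintro rfl; simp at his
    have hci : c ≠ i := by rintro rfl; simp at his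
    have hdi : d ≠ i := by rintro rfl; simp at his
    -- Bad u v := p i ⬝ᵥ (p u ⨯₃ p v) = 0 ; flipping
    have flip : ∀ u v : Fin m, p i ⬝ᵥ (p u ⨯₃ p v) = 0 → p i ⬝ᵥ (p v ⨯₃ p u) = 0 := by
      intro u v huv
      rw [← cross_anticomm, dotProduct_neg, huv, neg_zero]
    -- a uniform "finish with two good pairs" step
    have finish : ∀ u v y z : Fin m,
        (∀ j, j ∈ insert a ({b, c, d} : Finset (Fin m)) → j = u ∨ j = v ∨ j = y ∨ j = z) →
        p i ⬝ᵥ (p u ⨯₃ p v) ≠ 0 → p i ⬝ᵥ (p y ⨯₃ p z) ≠ 0 →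
        ∃ w1 w2 : Fin 3 → ℂ, (∀ j ∈ insert a ({b, c, d} : Finset (Fin m)),
          (w1 ⬝ᵥ p j) * (w2 ⬝ᵥ p j) = 0) ∧ (w1 ⬝ᵥ p i) ≠ 0 ∧ (w2 ⬝ᵥ p i) ≠ 0 := by
      intro u v y z hcov huv hyz
      refine ⟨p u ⨯₃ p v, p y ⨯₃ p z, ?_, by rwa [dotProduct_comm], by rwa [dotProduct_comm]⟩
      intro j hj
      rcases hcov j hj with rfl | rfl | rfl | rfl
      · rw [dotProduct_comm, dot_self_cross, zero_mul]
      · rw [dotProduct_comm, dot_cross_self, zero_mul]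
      · rw [mul_comm, dotProduct_comm, dot_self_cross, zero_mul]
      · rw [mul_comm, dotProduct_comm, dot_cross_self, zero_mul]
    by_cases h1 : p i ⬝ᵥ (p a ⨯₃ p b) = 0
    · by_cases h2 : p i ⬝ᵥ (p a ⨯₃ p c) = 0
      · exact absurd (kprime h4 hab hac hai hbc hbi hci (hne a)
          (hdist a i hai) h1 h2) not_false
      · by_cases h3 : p i ⬝ᵥ (p b ⨯₃ p d) = 0
        · exact absurd (kprime h4 hab.symm hbd hbi had hai hdi (hne b)
            (hdist b i hbi) (flip a b h1) h3) not_false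
        · -- pairs (a,c) and (b,d)
          refine finish a c b d ?_ h2 h3
          intro j hj
          simp only [Finset.mem_insert, Finset.mem_singleton] at hj
          tauto
    · by_cases h2 : p i ⬝ᵥ (p c ⨯₃ p d) = 0
      · by_cases h3 : p i ⬝ᵥ (p a ⨯₃ p c) = 0
        · exact absurd (kprime h4 hcd hac.symm hci had.symm hdi hai (hne c)
            (hdist c i hci) h2 (flip a c h3)) not_false
        · by_cases h5 : p i ⬝ᵥ (p b ⨯₃ p d) = 0
          · exact absurd (kprime h4 hcd.symm hbd.symm hdi hbc.symm hci hbi (hne d)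
              (hdist d i hdi) (flip c d h2) (flip b d h5)) not_false
          · refine finish a c b d ?_ h3 h5
            intro j hj
            simp only [Finset.mem_insert, Finset.mem_singleton] at hj
            tauto
      · -- pairs (a,b) and (c,d)
        refine finish a b c d ?_ h1 h2
        intro j hj
        simp only [Finset.mem_insert, Finset.mem_singleton] at hj
        tauto
  
/-! ### The quadratic polynomial and range computations -/

lemma evalMap_apply (q : (MvPolynomial.homogeneousSubmodule (Fin 3) ℂ 2)) (j : Fin m) :
    evalMap m p q j = MvPolynomial.eval (p j) q.1 := rfl

lemma range_eq_top (hm : m ≤ 5) (hne : ∀ i, p i ≠ 0)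
    (hdist : ∀ i j, i ≠ j → ¬ ∃ c : ℂ, p j = c • p i)
    (h4 : ¬ ∃ (s : Finset (Fin m)) (l : MvPolynomial (Fin 3) ℂ),
      s.card = 4 ∧ l ≠ 0 ∧ l.IsHomogeneous 1 ∧ ∀ i ∈ s, MvPolynomial.eval (p i) l = 0) :
    LinearMap.range (evalMap m p) = ⊤ := by
  rw [eq_top_iff]
  intro v _
  have hv : v = ∑ i, v i • (Pi.single i 1 : Fin m → ℂ) := by
    funext j
    simp [Finset.sum_apply, Pi.single_apply]
  rw [hv]
  apply Submodule.sum_mem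
  intro i _
  apply Submodule.smul_mem
  have hcard : (Finset.univ.erase i).card ≤ 4 := by
    rw [Finset.card_erase_of_mem (Finset.mem_univ i), Finset.card_univ, Fintype.card_fin]
    omega
  obtain ⟨w1, w2, hall, hx1, hx2⟩ := key hne hdist h4 i (Finset.univ.erase i)
    (Finset.notMem_erase i _) hcard
  have hmem : linPoly w1 * linPoly w2 ∈ MvPolynomial.homogeneousSubmodule (Fin 3) ℂ 2 := by
    rw [MvPolynomial.mem_homogeneousSubmodule]
    exact (linPoly_isHomogeneous w1).mul (linPoly_isHomogeneous w2)
  refine ⟨((w1 ⬝ᵥ p i) * (w2 ⬝ᵥ p i))⁻¹ • ⟨linPoly w1 * linPoly w2, hmem⟩, ?_⟩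
  rw [LinearMap.map_smul]
  funext j
  rw [Pi.smul_apply, evalMap_apply]
  show ((w1 ⬝ᵥ p i) * (w2 ⬝ᵥ p i))⁻¹ * MvPolynomial.eval (p j) (linPoly w1 * linPoly w2)
    = (Pi.single i 1 : Fin m → ℂ) j
  rw [_root_.map_mul, eval_linPoly, eval_linPoly]
  by_cases hji : j = i
  · subst hji
    rw [Pi.single_eq_same]
    exact inv_mul_cancel₀ (mul_ne_zero hx1 hx2)
  · rw [Pi.single_eq_of_ne hji]
    rw [hall j (Finset.mem_erase.mpr ⟨hji, Finset.mem_univ j⟩), mul_zero]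

/-! ### Dimension of the space of quadratic forms -/

/-- The six exponent vectors of degree-two monomials in three variables. -/
noncomputable def expo : Fin 6 → (Fin 3 →₀ ℕ) := fun k =>
  Finsupp.equivFunOnFinite.symm
    (![![2,0,0], ![0,2,0], ![0,0,2], ![1,1,0], ![1,0,1], ![0,1,1]] k)

lemma degree_eq (d : Fin 3 →₀ ℕ) : d.degree = d 0 + d 1 + d 2 := by
  rw [Finsupp.degree_eq_weight_one]
  simp [Finsupp.weight, Finsupp.linearCombination, Finsupp.sum_fintype, Fin.sum_univ_three]

lemma expo_apply (k : Fin 6) (j : Fin 3) :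
    expo k j = ![![2,0,0], ![0,2,0], ![0,0,2], ![1,1,0], ![1,0,1], ![0,1,1]] k j := rfl

lemma expo_degree (k : Fin 6) : (expo k).degree = 2 := by
  rw [degree_eq]
  fin_cases k <;> rfl

lemma expo_injective : Function.Injective expo := by
  intro k k' h
  fin_cases k <;> fin_cases k' <;> first
    | rfl
    | (exfalso
       first
        | exact absurd (DFunLike.congr_fun h (0 : Fin 3)) (by decide)
        | exact absurd (DFunLike.congr_fun h (1 : Fin 3)) (by decide)
        | exact absurd (DFunLike.congr_fun h (2 : Fin 3)) (by decide))

lemma expo_complete (d : Fin 3 →₀ ℕ) (hd : d.degree = 2) : ∃ k : Fin 6, d = expo k := by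
  rw [degree_eq] at hd
  have hrepr : d = Finsupp.equivFunOnFinite.symm ⇑d :=
    (Finsupp.equivFunOnFinite.symm_apply_apply d).symm
  have hcases : (d 0 = 2 ∧ d 1 = 0 ∧ d 2 = 0) ∨ (d 0 = 0 ∧ d 1 = 2 ∧ d 2 = 0) ∨
      (d 0 = 0 ∧ d 1 = 0 ∧ d 2 = 2) ∨ (d 0 = 1 ∧ d 1 = 1 ∧ d 2 = 0) ∨
      (d 0 = 1 ∧ d 1 = 0 ∧ d 2 = 1) ∨ (d 0 = 0 ∧ d 1 = 1 ∧ d 2 = 1) := by omega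
  rcases hcases with ⟨e0, e1, e2⟩ | ⟨e0, e1, e2⟩ | ⟨e0, e1, e2⟩ | ⟨e0, e1, e2⟩ |
    ⟨e0, e1, e2⟩ | ⟨e0, e1, e2⟩
  · exact ⟨0, by rw [hrepr]; congr 1; funext j; fin_cases j <;> simpa⟩
  · exact ⟨1, by rw [hrepr]; congr 1; funext j; fin_cases j <;> simpa⟩
  · exact ⟨2, by rw [hrepr]; congr 1; funext j; fin_cases j <;> simpa⟩
  · exact ⟨3, by rw [hrepr]; congr 1; funext j; fin_cases j <;> simpa⟩
  · exact ⟨4, by rw [hrepr]; congr 1; funext j; fin_cases j <;> simpa⟩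
  · exact ⟨5, by rw [hrepr]; congr 1; funext j; fin_cases j <;> simpa⟩

/-- Evaluating the six coefficients of a homogeneous quadratic form. -/
noncomputable def coeffMap : (MvPolynomial.homogeneousSubmodule (Fin 3) ℂ 2) →ₗ[ℂ] (Fin 6 → ℂ) :=
  LinearMap.pi fun k => (MvPolynomial.lcoeff ℂ (expo k)) ∘ₗ
    (MvPolynomial.homogeneousSubmodule (Fin 3) ℂ 2).subtype

lemma coeffMap_bijective : Function.Bijective (coeffMap) := by
  constructor
  · intro q1 q2 h
    ext d
    by_cases hd : MvPolynomial.coeff d (q1 : MvPolynomial (Fin 3) ℂ)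
        = MvPolynomial.coeff d (q2 : MvPolynomial (Fin 3) ℂ)
    · exact hd
    · exfalso
      have hdeg : d.degree = 2 := by
        by_cases hz1 : MvPolynomial.coeff d (q1 : MvPolynomial (Fin 3) ℂ) ≠ 0
        · have := q1.2 hz1
          rwa [Pi.one_def, ← Finsupp.degree_eq_weight_one] at this
        · push_neg at hz1
          have hz2 : MvPolynomial.coeff d (q2 : MvPolynomial (Fin 3) ℂ) ≠ 0 := by
            intro hz2; exact hd (hz1.trans hz2.symm)
          have := q2.2 hz2
          rwa [Pi.one_def, ← Finsupp.degree_eq_weight_one] at this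
      obtain ⟨k, rfl⟩ := expo_complete d hdeg
      exact hd (congrFun h k)
  · intro c
    have hmem : (∑ k, MvPolynomial.monomial (expo k) (c k)) ∈
        MvPolynomial.homogeneousSubmodule (Fin 3) ℂ 2 := by
      rw [MvPolynomial.mem_homogeneousSubmodule]
      apply IsHomogeneous.sum
      intro k _
      exact isHomogeneous_monomial _ (expo_degree k)
    refine ⟨⟨_, hmem⟩, ?_⟩
    funext k
    show MvPolynomial.coeff (expo k) (∑ k', MvPolynomial.monomial (expo k') (c k')) = c k
    rw [MvPolynomial.coeff_sum]
    rw [Finset.sum_eq_single k]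
    · simp [MvPolynomial.coeff_monomial]
    · intro b _ hb
      rw [MvPolynomial.coeff_monomial, if_neg (fun hh => hb (expo_injective hh))]
    · simp

noncomputable def quadEquiv : (MvPolynomial.homogeneousSubmodule (Fin 3) ℂ 2) ≃ₗ[ℂ] (Fin 6 → ℂ) :=
  LinearEquiv.ofBijective coeffMap coeffMap_bijective

instance : FiniteDimensional ℂ (MvPolynomial.homogeneousSubmodule (Fin 3) ℂ 2) :=
  Module.Finite.equiv quadEquiv.symm

lemma finrank_quad : finrank ℂ (MvPolynomial.homogeneousSubmodule (Fin 3) ℂ 2) = 6 := by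
  rw [quadEquiv.finrank_eq, finrank_fintype_fun_eq_card, Fintype.card_fin]

/-! ### Kernel characterization -/

lemma mem_ker_iff (q : (MvPolynomial.homogeneousSubmodule (Fin 3) ℂ 2)) :
    q ∈ LinearMap.ker (evalMap m p) ↔ ∀ i, MvPolynomial.eval (p i) q.1 = 0 := by
  rw [LinearMap.mem_ker, funext_iff]
  simp only [evalMap_apply, Pi.zero_apply]

end Main

/-- Let `p 0, …, p (m-1)` be distinct points in `ℙ²(ℂ)` with `m ≤ 9`, no four
of them collinear and no seven lying on a common conic. Let `φ` be the evaluation map of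
quadratic forms at the points. Then the cokernel of `φ` has dimension `m − 6` if `m ≥ 7`,
dimension 0 if `m ≤ 5`, and for `m = 6` it has dimension 1 if all six points lie on a conic
and dimension 0 otherwise. -/
theorem stmt_7 (m : ℕ) (hm : m ≤ 9) (p : Fin m → (Fin 3 → ℂ))
    (hne : ∀ i, p i ≠ 0)
    (hdist : ∀ i j, i ≠ j → ¬ ∃ c : ℂ, p j = c • p i)
    (h4 : ¬ ∃ (s : Finset (Fin m)) (l : MvPolynomial (Fin 3) ℂ),
      s.card = 4 ∧ l ≠ 0 ∧ l.IsHomogeneous 1 ∧ ∀ i ∈ s, MvPolynomial.eval (p i) l = 0)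
    (h7 : ¬ ∃ (s : Finset (Fin m)) (q : MvPolynomial (Fin 3) ℂ),
      s.card = 7 ∧ q ≠ 0 ∧ q.IsHomogeneous 2 ∧ ∀ i ∈ s, MvPolynomial.eval (p i) q = 0) :
    (7 ≤ m →
      Module.finrank ℂ ((Fin m → ℂ) ⧸ LinearMap.range (evalMap m p)) = m - 6) ∧
    (m ≤ 5 →
      Module.finrank ℂ ((Fin m → ℂ) ⧸ LinearMap.range (evalMap m p)) = 0) ∧
    (m = 6 →
      (((∃ q : MvPolynomial (Fin 3) ℂ,
          q ≠ 0 ∧ q.IsHomogeneous 2 ∧ ∀ i, MvPolynomial.eval (p i) q = 0) →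
        Module.finrank ℂ ((Fin m → ℂ) ⧸ LinearMap.range (evalMap m p)) = 1) ∧
       ((¬ ∃ q : MvPolynomial (Fin 3) ℂ,
          q ≠ 0 ∧ q.IsHomogeneous 2 ∧ ∀ i, MvPolynomial.eval (p i) q = 0) →
        Module.finrank ℂ ((Fin m → ℂ) ⧸ LinearMap.range (evalMap m p)) = 0))) := by
  have hquot := Submodule.finrank_quotient_add_finrank (LinearMap.range (evalMap m p))
  have hrn := LinearMap.finrank_range_add_finrank_ker (evalMap m p)
  rw [finrank_quad] at hrn
  have hpim : Module.finrank ℂ (Fin m → ℂ) = m := by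
    rw [Module.finrank_fintype_fun_eq_card, Fintype.card_fin]
  rw [hpim] at hquot
  refine ⟨?_, ?_, ?_⟩
  · -- m ≥ 7
    intro hm7
    have hker : LinearMap.ker (evalMap m p) = ⊥ := by
      rw [Submodule.eq_bot_iff]
      intro q hq
      by_contra hq0
      obtain ⟨t, _, htc⟩ := Finset.exists_subset_card_eq
        (show 7 ≤ (Finset.univ : Finset (Fin m)).card by
          rw [Finset.card_univ, Fintype.card_fin]; exact hm7)
      refine h7 ⟨t, q.1, htc, ?_, q.2, fun i _ => (mem_ker_iff q).mp hq i⟩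
      intro h0
      exact hq0 (by ext; simp [h0])
    rw [hker, finrank_bot] at hrn
    omega
  · -- m ≤ 5
    intro hm5
    have hrange := range_eq_top hm5 hne hdist h4
    have hr : Module.finrank ℂ ↥(LinearMap.range (evalMap m p)) = m := by
      rw [hrange, finrank_top, hpim]
    omega
  · -- m = 6
    intro hm6
    subst hm6
    constructor
    · rintro ⟨q0, hq0, hq0h, hq0e⟩
      -- the kernel is 1-dimensional
      have hq0mem : q0 ∈ MvPolynomial.homogeneousSubmodule (Fin 3) ℂ 2 :=
        (MvPolynomial.mem_homogeneousSubmodule 2 q0).mpr hq0h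
      have hker_ne : LinearMap.ker (evalMap 6 p) ≠ ⊥ := by
        intro hbot
        have : (⟨q0, hq0mem⟩ : MvPolynomial.homogeneousSubmodule (Fin 3) ℂ 2)
            ∈ LinearMap.ker (evalMap 6 p) := (mem_ker_iff _).mpr hq0e
        rw [hbot, Submodule.mem_bot] at this
        exact hq0 (by simpa [Subtype.ext_iff] using this)
      -- the 5-point evaluation map
      set p' : Fin 5 → (Fin 3 → ℂ) := fun j => p j.castSucc with hp'
      have hrange5 : LinearMap.range (evalMap 5 p') = ⊤ := by
        apply range_eq_top (by norm_num)
        · intro j; exact hne _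
        · intro i j hij
          exact hdist _ _ (fun hh => hij (Fin.castSucc_injective _ hh))
        · rintro ⟨s, l, hc, hl0, hl1, hev⟩
          refine h4 ⟨s.map Fin.castSuccEmb, l, by rw [Finset.card_map, hc], hl0, hl1, ?_⟩
          intro i hi
          rw [Finset.mem_map] at hi
          obtain ⟨j, hj, rfl⟩ := hi
          exact hev j hj
      have hrn5 := LinearMap.finrank_range_add_finrank_ker (evalMap 5 p')
      rw [finrank_quad, hrange5, finrank_top, Module.finrank_fintype_fun_eq_card,
        Fintype.card_fin] at hrn5
      -- ker φ ≤ ker ψ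
      have hle : LinearMap.ker (evalMap 6 p) ≤ LinearMap.ker (evalMap 5 p') := by
        intro q hq
        rw [mem_ker_iff] at hq ⊢
        intro j
        exact hq j.castSucc
      have hker_le : Module.finrank ℂ ↥(LinearMap.ker (evalMap 6 p)) ≤ 1 := by
        have := Submodule.finrank_mono hle
        omega
      have hker_pos : 0 < Module.finrank ℂ ↥(LinearMap.ker (evalMap 6 p)) := by
        rcases Nat.eq_zero_or_pos (Module.finrank ℂ ↥(LinearMap.ker (evalMap 6 p))) with h0 | h0
        · exact absurd (Submodule.finrank_eq_zero.mp h0) hker_ne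
        · exact h0
      have hker1 : Module.finrank ℂ ↥(LinearMap.ker (evalMap 6 p)) = 1 := by omega
      rw [hker1] at hrn
      omega
    · intro hnocon
      have hker : LinearMap.ker (evalMap 6 p) = ⊥ := by
        rw [Submodule.eq_bot_iff]
        intro q hq
        by_contra hq0
        refine hnocon ⟨q.1, ?_, q.2, (mem_ker_iff q).mp hq⟩
        intro h0
        exact hq0 (by ext; simp [h0])
      rw [hker, finrank_bot] at hrn
      omega
end

section
/- Let K = C(a, b) be a rational function field in two variables over C, and let E be the elliptic curve y^2 = x^3 + a^2 − b^3 over K. Then P = (b, a) is a K-rational point of E of infinite order. -/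
set_option maxHeartbeats 1000000
set_option synthInstance.maxHeartbeats 400000


/-- The rational function field `ℂ(a, b)` in two variables. -/
abbrev K18 : Type := FractionRing (MvPolynomial (Fin 2) ℂ)

/-- The element `a` of `ℂ(a, b)`. -/
noncomputable def a18 : K18 := algebraMap (MvPolynomial (Fin 2) ℂ) K18 (MvPolynomial.X 0)

/-- The element `b` of `ℂ(a, b)`. -/
noncomputable def b18 : K18 := algebraMap (MvPolynomial (Fin 2) ℂ) K18 (MvPolynomial.X 1)

/-- The elliptic curve `E : y² = x³ + a² − b³` over `K = ℂ(a, b)`. -/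
noncomputable def W18 : WeierstrassCurve.Affine K18 :=
  ⟨0, 0, 0, 0, a18 ^ 2 - b18 ^ 3⟩

/- ### Auxiliary setup for the proof.

We use the reduction of the curve modulo the prime `c = a² - b³` of `ℂ[a, b]`.  The special
fibre is the cuspidal cubic `y² = x³`, whose smooth part is isomorphic to the additive group
via `(x, y) ↦ x/y`.  Concretely, we use the parametrisation `a ↦ t³`, `b ↦ t²` of the cusp,
i.e. the ring homomorphism `ev18 : ℂ[a,b] → ℂ[t]` whose kernel is `(c)`, and we track through
the group law the "reduced value" of all coordinates, as elements of `ℂ(t)`.  The point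
`n • P` turns out to have reduced coordinates `(t²/n², t³/n³)` (corresponding to the additive
parameter `n/t` on the smooth part of the cuspidal cubic), which in particular shows that
`n • P ≠ 0` for all `n ≥ 1`. -/

noncomputable section Aux18

abbrev R18 : Type := MvPolynomial (Fin 2) ℂ
abbrev F18 : Type := FractionRing (Polynomial ℂ)

def ev18 : R18 →+* Polynomial ℂ :=
  (MvPolynomial.aeval ![Polynomial.X ^ 3, Polynomial.X ^ 2]).toRingHom

def evF18 : R18 →+* F18 := (algebraMap (Polynomial ℂ) F18).comp ev18

def t18 : F18 := algebraMap (Polynomial ℂ) F18 Polynomial.X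

instance : CharZero K18 :=
  charZero_of_injective_algebraMap (IsFractionRing.injective R18 K18)

instance : CharZero F18 :=
  charZero_of_injective_algebraMap (IsFractionRing.injective (Polynomial ℂ) F18)

lemma t18_ne_zero : t18 ≠ 0 := by
  intro h
  have := IsFractionRing.injective (Polynomial ℂ) F18 (h.trans (map_zero _).symm)
  exact Polynomial.X_ne_zero this

lemma evF18_ne_zero {q : R18} (h : ev18 q ≠ 0) : evF18 q ≠ 0 := by
  intro h0
  exact h (IsFractionRing.injective (Polynomial ℂ) F18 (h0.trans (map_zero _).symm))

/-- `Good x v` : the element `x` of `K18` can be written as `p/q` with `c ∤ q`, and its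
reduction at the place `c = a² - b³` (computed via `ev18`) equals `v ∈ ℂ(t)`. -/
def Good (x : K18) (v : F18) : Prop :=
  ∃ p q : R18, ev18 q ≠ 0 ∧ algebraMap R18 K18 q * x = algebraMap R18 K18 p ∧
    v * evF18 q = evF18 p

lemma good_algebraMap (p : R18) : Good (algebraMap R18 K18 p) (evF18 p) :=
  ⟨p, 1, by simp, by simp, by simp⟩

lemma good_one : Good 1 1 := by simpa using good_algebraMap 1

lemma good_natCast (k : ℕ) : Good (k : K18) (k : F18) := by
  simpa using good_algebraMap (k : R18)

lemma good_add {x v x' v'} (h : Good x v) (h' : Good x' v') : Good (x + x') (v + v') := by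
  obtain ⟨p, q, hq, hx, hv⟩ := h
  obtain ⟨p', q', hq', hx', hv'⟩ := h'
  refine ⟨p * q' + p' * q, q * q', by rw [map_mul]; exact mul_ne_zero hq hq', ?_, ?_⟩
  · have : algebraMap R18 K18 (q * q') * (x + x') =
        (algebraMap R18 K18 q * x) * algebraMap R18 K18 q' +
        (algebraMap R18 K18 q' * x') * algebraMap R18 K18 q := by
      rw [map_mul]; ring
    rw [this, hx, hx', ← map_mul, ← map_mul, ← map_add]
  · have : (v + v') * evF18 (q * q') =
        (v * evF18 q) * evF18 q' + (v' * evF18 q') * evF18 q := by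
      rw [map_mul]; ring
    rw [this, hv, hv', ← map_mul, ← map_mul, ← map_add]

lemma good_mul {x v x' v'} (h : Good x v) (h' : Good x' v') : Good (x * x') (v * v') := by
  obtain ⟨p, q, hq, hx, hv⟩ := h
  obtain ⟨p', q', hq', hx', hv'⟩ := h'
  refine ⟨p * p', q * q', by rw [map_mul]; exact mul_ne_zero hq hq', ?_, ?_⟩
  · have : algebraMap R18 K18 (q * q') * (x * x') =
        (algebraMap R18 K18 q * x) * (algebraMap R18 K18 q' * x') := by
      rw [map_mul]; ring
    rw [this, hx, hx', ← map_mul]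
  · have : (v * v') * evF18 (q * q') = (v * evF18 q) * (v' * evF18 q') := by
      rw [map_mul]; ring
    rw [this, hv, hv', ← map_mul]

lemma good_neg {x v} (h : Good x v) : Good (-x) (-v) := by
  obtain ⟨p, q, hq, hx, hv⟩ := h
  refine ⟨-p, q, hq, ?_, ?_⟩
  · rw [map_neg, ← hx]; ring
  · rw [map_neg, ← hv]; ring

lemma good_sub {x v x' v'} (h : Good x v) (h' : Good x' v') : Good (x - x') (v - v') := by
  simpa [sub_eq_add_neg] using good_add h (good_neg h')

lemma good_pow {x v} (h : Good x v) (k : ℕ) : Good (x ^ k) (v ^ k) := by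
  induction k with
  | zero => simpa using good_one
  | succ m ih => rw [pow_succ, pow_succ]; exact good_mul ih h

lemma good_inv {x v} (h : Good x v) (hv : v ≠ 0) : Good x⁻¹ v⁻¹ := by
  obtain ⟨p, q, hq, hx, hvq⟩ := h
  have hevq : evF18 q ≠ 0 := evF18_ne_zero hq
  have hevp : evF18 p ≠ 0 := by rw [← hvq]; exact mul_ne_zero hv hevq
  have hp : ev18 p ≠ 0 := fun h0 => hevp (by rw [evF18, RingHom.comp_apply, h0, map_zero])
  have hpK : algebraMap R18 K18 p ≠ 0 := by
    intro h0
    exact hp (by rw [IsFractionRing.injective R18 K18 (h0.trans (map_zero _).symm), map_zero])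
  have hxne : x ≠ 0 := by
    intro h0
    rw [h0, mul_zero] at hx
    exact hpK hx.symm
  refine ⟨q, p, hp, ?_, ?_⟩
  · have h1 : algebraMap R18 K18 p * x⁻¹ = (algebraMap R18 K18 q * x) * x⁻¹ := by rw [hx]
    rw [h1, mul_assoc, mul_inv_cancel₀ hxne, mul_one]
  · rw [inv_mul_eq_iff_eq_mul₀ hv, ← hvq]

lemma good_div {x v x' v'} (h : Good x v) (h' : Good x' v') (hv' : v' ≠ 0) :
    Good (x / x') (v / v') := by
  rw [div_eq_mul_inv, div_eq_mul_inv]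
  exact good_mul h (good_inv h' hv')

lemma good_unique {x v v'} (h : Good x v) (h' : Good x v') : v = v' := by
  obtain ⟨p, q, hq, hx, hvq⟩ := h
  obtain ⟨p', q', hq', hx', hvq'⟩ := h'
  have key : p * q' = p' * q := by
    apply IsFractionRing.injective R18 K18
    rw [map_mul, map_mul, ← hx, ← hx']
    ring
  have : evF18 p * evF18 q' = evF18 p' * evF18 q := by
    rw [← map_mul, ← map_mul, key]
  have hq0 : evF18 q ≠ 0 := evF18_ne_zero hq
  have hq0' : evF18 q' ≠ 0 := evF18_ne_zero hq'
  have h2 : v * (evF18 q * evF18 q') = v' * (evF18 q * evF18 q') := by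
    linear_combination evF18 q' * hvq - evF18 q * hvq' + this
  exact mul_right_cancel₀ (mul_ne_zero hq0 hq0') h2

lemma good_congr {x v v'} (h : Good x v) (e : v = v') : Good x v' := e ▸ h

lemma good_a18 : Good a18 (t18 ^ 3) := by
  have := good_algebraMap (MvPolynomial.X 0 : R18)
  have h : evF18 (MvPolynomial.X 0 : R18) = t18 ^ 3 := by
    simp [evF18, ev18, t18, map_pow]
  rwa [h] at this

lemma good_b18 : Good b18 (t18 ^ 2) := by
  have := good_algebraMap (MvPolynomial.X 1 : R18)
  have h : evF18 (MvPolynomial.X 1 : R18) = t18 ^ 2 := by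
    simp [evF18, ev18, t18, map_pow]
  rwa [h] at this

@[simp] lemma W18_a1 : W18.a₁ = 0 := rfl
@[simp] lemma W18_a2 : W18.a₂ = 0 := rfl
@[simp] lemma W18_a3 : W18.a₃ = 0 := rfl
@[simp] lemma W18_a4 : W18.a₄ = 0 := rfl
@[simp] lemma W18_a6 : W18.a₆ = a18 ^ 2 - b18 ^ 3 := rfl

lemma a18_ne_zero : a18 ≠ 0 := by
  intro h
  have := IsFractionRing.injective R18 K18 (h.trans (map_zero _).symm)
  exact MvPolynomial.X_ne_zero 0 this

lemma hP18 : W18.Nonsingular b18 a18 := by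
  rw [WeierstrassCurve.Affine.nonsingular_iff, WeierstrassCurve.Affine.equation_iff]
  constructor
  · simp only [W18_a1, W18_a2, W18_a3, W18_a4, W18_a6]
    ring
  · right
    simp only [W18_a1, W18_a3, zero_mul, sub_zero, add_zero, mul_zero]
    intro h
    apply a18_ne_zero
    have h2 : a18 + a18 = 0 := by linear_combination h
    have : (2 : K18) * a18 = 0 := by linear_combination h2
    rcases mul_eq_zero.mp this with h' | h'
    · exact absurd h' two_ne_zero
    · exact h'

end Aux18

noncomputable section Main18

open WeierstrassCurve.Affine

/-! Generic field identities used for the reduced values. -/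

section FieldIds

variable {F : Type*} [Field F] {t N : F}

lemma aux_pow_eq (ht : t ≠ 0) (hN : N ≠ 0) {k : ℕ} (h : t ^ k / N ^ k = t ^ k) :
    N ^ k = 1 := by
  have hNk : N ^ k ≠ 0 := pow_ne_zero k hN
  rw [div_eq_iff hNk] at h
  have h1 : t ^ k * (N ^ k - 1) = 0 := by linear_combination -h
  rcases mul_eq_zero.mp h1 with h2 | h2
  · exact absurd h2 (pow_ne_zero k ht)
  · linear_combination h2

lemma aux_cube_neg (ht : t ≠ 0) (hN : N ≠ 0) (h : t ^ 3 / N ^ 3 = -t ^ 3) :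
    N ^ 3 = -1 := by
  have hNk : N ^ 3 ≠ 0 := pow_ne_zero 3 hN
  rw [div_eq_iff hNk] at h
  have h1 : t ^ 3 * (N ^ 3 + 1) = 0 := by linear_combination h
  rcases mul_eq_zero.mp h1 with h2 | h2
  · exact absurd h2 (pow_ne_zero 3 ht)
  · linear_combination h2

lemma aux_slope_val (ht : t ≠ 0) (hN : N ≠ 0) (hNN : N * (N + 1) ≠ 0)
    (hd : t ^ 2 / N ^ 2 - t ^ 2 ≠ 0) :
    (t ^ 3 / N ^ 3 - t ^ 3) / (t ^ 2 / N ^ 2 - t ^ 2) = t * (N ^ 2 + N + 1) / (N * (N + 1)) := by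
  rw [div_eq_div_iff hd hNN]
  field_simp
  ring

lemma aux_x_val (ht : t ≠ 0) (hN : N ≠ 0) (hN1 : N + 1 ≠ 0) :
    (t * (N ^ 2 + N + 1) / (N * (N + 1))) ^ 2 - t ^ 2 / N ^ 2 - t ^ 2 = t ^ 2 / (N + 1) ^ 2 := by
  have hNN : N * (N + 1) ≠ 0 := mul_ne_zero hN hN1
  field_simp
  ring

lemma aux_y_val (ht : t ≠ 0) (hN : N ≠ 0) (hN1 : N + 1 ≠ 0) :
    -(t * (N ^ 2 + N + 1) / (N * (N + 1)) * (t ^ 2 / (N + 1) ^ 2 - t ^ 2 / N ^ 2) + t ^ 3 / N ^ 3) =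
      t ^ 3 / (N + 1) ^ 3 := by
  rw [eq_div_iff (pow_ne_zero 3 hN1)]
  field_simp
  ring

end FieldIds

/-- The key induction: `(n+1) • P` is an affine point whose coordinates reduce, at the place
`c = a² - b³`, to the point `(t²/(n+1)², t³/(n+1)³)` on the cuspidal cubic `y² = x³`. -/
lemma key18 (n : ℕ) : ∃ (x y : K18) (h : W18.Nonsingular x y),
    (n + 1) • (Point.some _ _ hP18 : W18.Point) = Point.some _ _ h ∧
    Good x (t18 ^ 2 / ((n : F18) + 1) ^ 2) ∧ Good y (t18 ^ 3 / ((n : F18) + 1) ^ 3) := by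
  induction n with
  | zero =>
    refine ⟨b18, a18, hP18, by rw [show (0 + 1 : ℕ) = 1 from rfl, one_nsmul], ?_, ?_⟩
    · exact good_congr good_b18 (by push_cast; norm_num)
    · exact good_congr good_a18 (by push_cast; norm_num)
  | succ m ih =>
    obtain ⟨x, y, h, hs, hgx, hgy⟩ := ih
    have ht := t18_ne_zero
    have hN : ((m : F18) + 1) ≠ 0 := Nat.cast_add_one_ne_zero m
    have hN1 : ((m : F18) + 1) + 1 ≠ 0 := by
      have := Nat.cast_add_one_ne_zero (R := F18) (m + 1)
      push_cast at this
      exact this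
    have hNN : ((m : F18) + 1) * (((m : F18) + 1) + 1) ≠ 0 := mul_ne_zero hN hN1
    -- the case `m = 0` detector
    have hm_of : ((m : F18) + 1) ^ 2 = 1 → m = 0 := by
      intro h2
      have h2' : (((m + 1) ^ 2 : ℕ) : F18) = ((1 : ℕ) : F18) := by push_cast; linear_combination h2
      have h2'' : (m + 1) ^ 2 = 1 := Nat.cast_injective h2'
      by_contra hm
      have h1 : 1 ≤ m := Nat.one_le_iff_ne_zero.mpr hm
      nlinarith [h2'']
    -- non-degeneracy of the addition `(m+1) • P + P`
    have hnegY : W18.negY b18 a18 = -a18 := by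
      simp [WeierstrassCurve.Affine.negY]
    have hxy : x = b18 → y ≠ W18.negY b18 a18 := by
      intro _ hy
      rw [hnegY] at hy
      have hgy' := hgy
      rw [hy] at hgy'
      have hval : t18 ^ 3 / ((m : F18) + 1) ^ 3 = -t18 ^ 3 := by
        have := good_unique hgy' (good_neg good_a18)
        linear_combination this
      have h3 : ((m : F18) + 1) ^ 3 = -1 := aux_cube_neg ht hN hval
      have h3' : (((m + 1) ^ 3 + 1 : ℕ) : F18) = ((0 : ℕ) : F18) := by
        push_cast
        linear_combination h3
      have := Nat.cast_injective h3'
      omega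
    -- the slope
    set ℓ := W18.slope x b18 y a18 with hldef
    have hgl : Good ℓ (t18 * (((m : F18) + 1) ^ 2 + ((m : F18) + 1) + 1) /
        (((m : F18) + 1) * (((m : F18) + 1) + 1))) := by
      by_cases hx : x = b18
      · -- doubling case: necessarily `m = 0`, i.e. we are doubling `P` itself
        have hgx' := hgx
        rw [hx] at hgx'
        have hval : t18 ^ 2 / ((m : F18) + 1) ^ 2 = t18 ^ 2 := good_unique hgx' good_b18
        have hm0 : m = 0 := hm_of (aux_pow_eq ht hN hval)
        subst hm0
        rw [show (0 + 1 : ℕ) = 1 from rfl, one_nsmul] at hs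
        injection hs with e1 e2
        have hy' : y = a18 := e2.symm
        rw [hldef, slope_of_Y_ne hx (hxy hx)]
        have hexp : (3 * x ^ 2 + 2 * W18.a₂ * x + W18.a₄ - W18.a₁ * y) /
            (y - W18.negY x y) = 3 * b18 ^ 2 / (2 * a18) := by
          rw [hx, hy']
          simp only [W18_a1, W18_a2, W18_a4, WeierstrassCurve.Affine.negY, W18_a3]
          ring_nf
        rw [hexp]
        have h2a : (2 : F18) * t18 ^ 3 ≠ 0 := by
          exact mul_ne_zero two_ne_zero (pow_ne_zero 3 ht)
        have hg3 : Good (3 * b18 ^ 2 / (2 * a18)) ((3 : F18) * (t18 ^ 2) ^ 2 /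
            ((2 : F18) * t18 ^ 3)) := by
          have g3 : Good (3 : K18) ((3 : ℕ) : F18) := by
            simpa using good_natCast 3
          have g2 : Good (2 : K18) ((2 : ℕ) : F18) := by
            simpa using good_natCast 2
          push_cast at g3 g2
          exact good_div (good_mul g3 (good_pow good_b18 2)) (good_mul g2 good_a18) h2a
        apply good_congr hg3
        push_cast
        field_simp
        ring
      · -- generic case: `x ≠ b`
        have hm1 : m ≠ 0 := by
          intro hm0
          subst hm0
          rw [show (0 + 1 : ℕ) = 1 from rfl, one_nsmul] at hs
          injection hs with e1 e2
          exact hx e1.symm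
        have hd : t18 ^ 2 / ((m : F18) + 1) ^ 2 - t18 ^ 2 ≠ 0 := by
          intro h0
          rw [sub_eq_zero] at h0
          exact hm1 (hm_of (aux_pow_eq ht hN h0))
        rw [hldef, slope_of_X_ne hx]
        exact good_congr (good_div (good_sub hgy good_a18) (good_sub hgx good_b18) hd)
          (aux_slope_val ht hN hNN hd)
    -- the new coordinates
    have haddX : W18.addX x b18 ℓ = ℓ ^ 2 - x - b18 := by
      simp [WeierstrassCurve.Affine.addX]
    have hgX : Good (W18.addX x b18 ℓ) (t18 ^ 2 / (((m : F18) + 1) + 1) ^ 2) := by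
      rw [haddX]
      exact good_congr (good_sub (good_sub (good_pow hgl 2) hgx) good_b18)
        (aux_x_val ht hN hN1)
    have haddY : W18.addY x b18 y ℓ = -(ℓ * (W18.addX x b18 ℓ - x) + y) := by
      simp only [WeierstrassCurve.Affine.addY, WeierstrassCurve.Affine.negAddY,
        WeierstrassCurve.Affine.negY, W18_a1, W18_a3]
      ring
    have hgY : Good (W18.addY x b18 y ℓ) (t18 ^ 3 / (((m : F18) + 1) + 1) ^ 3) := by
      rw [haddY]
      refine good_congr (good_neg (good_add (good_mul hgl (good_sub hgX hgx)) hgy)) ?_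
      exact aux_y_val ht hN hN1
    refine ⟨W18.addX x b18 ℓ, W18.addY x b18 y ℓ, nonsingular_add h hP18 (fun e => hxy e.1 e.2), ?_, ?_, ?_⟩
    · rw [succ_nsmul, hs, Point.add_some (fun e => hxy e.1 e.2)]
    · exact good_congr hgX (by push_cast; ring_nf)
    · exact good_congr hgY (by push_cast; ring_nf)

end Main18

/-- Let `K = ℂ(a, b)` be a rational function field in two variables over `ℂ`,
and let `E` be the elliptic curve `y² = x³ + a² − b³` over `K`. Then `P = (b, a)` is a
`K`-rational point of `E` of infinite order. -/
theorem stmt_18 :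
    ∃ h : W18.Nonsingular b18 a18,
      ¬ IsOfFinAddOrder (WeierstrassCurve.Affine.Point.some _ _ h) := by
  refine ⟨hP18, ?_⟩
  rw [isOfFinAddOrder_iff_nsmul_eq_zero]
  rintro ⟨n, hn, hsm⟩
  obtain ⟨m, rfl⟩ : ∃ m, n = m + 1 := ⟨n - 1, by omega⟩
  obtain ⟨x, y, h, hs, -, -⟩ := key18 m
  rw [hs] at hsm
  exact WeierstrassCurve.Affine.Point.some_ne_zero h hsm
end
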